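/- arXiv:1104.5573 — 5 statements merged into one kernel-verified Lean document; each statement's English description precedes it below -/
import Mathlib

section
/- Let P be a lattice polytope of dimension n in M_ℝ ≅ ℝ^n with lattice M ≅ ℤ^n. Then for every integer k ≥ n−1, the equality (kP ∩ M) + (P ∩ M) = ((k+1)P) ∩ M holds, i.e. every lattice point of (k+1)P is the sum of a lattice point of kP and a lattice point of P. -/
open Set Pointwise

/-- `x` is a lattice point (all coordinates are integers). -/
def IsLat {n : ℕ} (x : Fin n → ℝ) : Prop := ∀ i, ∃ m : ℤ, x i = (m : ℝ)

/-- The set of lattice points of `P`. -/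
def latPts {n : ℕ} (P : Set (Fin n → ℝ)) : Set (Fin n → ℝ) := {x ∈ P | IsLat x}

/-- `P` is a lattice polytope: the convex hull of finitely many lattice points. -/
def IsLatticePolytope {n : ℕ} (P : Set (Fin n → ℝ)) : Prop :=
  ∃ S : Finset (Fin n → ℝ), (∀ x ∈ S, IsLat x) ∧ P = convexHull ℝ (S : Set (Fin n → ℝ))

/-- The dimension of a polytope: the dimension of its affine hull. -/
noncomputable def polyDim {n : ℕ} (P : Set (Fin n → ℝ)) : ℕ :=
  Module.finrank ℝ (affineSpan ℝ P).direction

/-- `P` is normal: for every `k ≥ 1`, every lattice point of the dilate `k • P`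
is a sum of `k` lattice points of `P`. -/
def IsNormal {n : ℕ} (P : Set (Fin n → ℝ)) : Prop :=
  ∀ k : ℕ, 1 ≤ k → ∀ v ∈ latPts ((k : ℝ) • P),
    ∃ u : Fin k → (Fin n → ℝ), (∀ i, u i ∈ latPts P) ∧ v = ∑ i, u i

lemma IsLat.add {n : ℕ} {x y : Fin n → ℝ} (hx : IsLat x) (hy : IsLat y) : IsLat (x + y) := by
  intro i
  obtain ⟨a, ha⟩ := hx i; obtain ⟨b, hb⟩ := hy i
  exact ⟨a + b, by simp [ha, hb]⟩

lemma IsLat.sub {n : ℕ} {x y : Fin n → ℝ} (hx : IsLat x) (hy : IsLat y) : IsLat (x - y) := by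
  intro i
  obtain ⟨a, ha⟩ := hx i; obtain ⟨b, hb⟩ := hy i
  exact ⟨a - b, by simp [ha, hb]⟩

lemma isLat_sum {n m : ℕ} {v : Fin m → (Fin n → ℝ)} (h : ∀ i, IsLat (v i)) :
    IsLat (∑ i, v i) := by
  intro i
  choose f hf using fun j => h j i
  exact ⟨∑ j, f j, by push_cast [Finset.sum_apply]; exact Finset.sum_congr rfl fun j _ => hf j⟩

lemma combo_mem_smul {n : ℕ} {P : Set (Fin n → ℝ)} (hP : Convex ℝ P) {m : ℕ}
    (v : Fin m → (Fin n → ℝ)) (hmem : ∀ i, v i ∈ P) (l : Fin m → ℝ) (hl0 : ∀ i, 0 ≤ l i)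
    (c : ℝ) (hsum : ∑ i, l i = c) (hm : 0 < m) :
    ∑ i, l i • v i ∈ c • P := by
  have hc0 : 0 ≤ c := by rw [← hsum]; exact Finset.sum_nonneg fun i _ => hl0 i
  rcases hc0.lt_or_eq with hpos | h0
  · rw [Set.mem_smul_set]
    refine ⟨∑ i, (c⁻¹ * l i) • v i, ?_, ?_⟩
    · refine hP.sum_mem (fun i _ => mul_nonneg (by positivity) (hl0 i)) ?_ (fun i _ => hmem i)
      rw [← Finset.mul_sum, hsum, inv_mul_cancel₀ hpos.ne']
    · rw [Finset.smul_sum]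
      refine Finset.sum_congr rfl fun i _ => ?_
      rw [smul_smul, mul_inv_cancel_left₀ hpos.ne']
  · have hall : ∀ i ∈ Finset.univ, l i = 0 :=
      (Finset.sum_eq_zero_iff_of_nonneg (fun i _ => hl0 i)).mp (hsum.trans h0.symm)
    rw [Set.mem_smul_set]
    refine ⟨v ⟨0, hm⟩, hmem _, ?_⟩
    rw [← h0, zero_smul]
    exact (Finset.sum_eq_zero fun i _ => by rw [hall i (Finset.mem_univ i), zero_smul]).symm

lemma det_int {m : ℕ} (A : Matrix (Fin m) (Fin m) ℝ) (h : ∀ i j, ∃ z : ℤ, A i j = z) :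
    ∃ D : ℤ, (D : ℝ) = A.det := by
  choose B hB using h
  refine ⟨(Matrix.of B).det, ?_⟩
  show (Int.castRingHom ℝ) (Matrix.of B).det = A.det
  rw [RingHom.map_det (Int.castRingHom ℝ) (Matrix.of B)]
  congr 1
  ext i j
  simp [hB]

lemma det_ne_zero_of_affineIndependent {n : ℕ} {v : Fin (n+1) → (Fin n → ℝ)}
    (h : AffineIndependent ℝ v) :
    (Matrix.of fun i => (Fin.snoc (v i) 1 : Fin (n+1) → ℝ)).det ≠ 0 := by
  intro hdet
  obtain ⟨g, hg0, hg⟩ := Matrix.exists_vecMul_eq_zero_iff.mpr hdet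
  have hsum : ∑ i, g i = 0 := by
    have := congrFun hg (Fin.last n)
    simpa [Matrix.vecMul, dotProduct, Fin.snoc_last] using this
  have hcomb : ∑ i, g i • v i = 0 := by
    funext j
    have := congrFun hg j.castSucc
    simpa [Matrix.vecMul, dotProduct, Fin.snoc_castSucc, Finset.sum_apply] using this
  have := affineIndependent_iff.mp h Finset.univ g hsum hcomb
  exact hg0 (funext fun i => this i (Finset.mem_univ i))

lemma snoc_combo {n : ℕ} (v : Fin (n+1) → (Fin n → ℝ)) (μ : Fin (n+1) → ℝ)
    (hμ : ∑ i, μ i = 1) :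
    (Fin.snoc (∑ i, μ i • v i) 1 : Fin (n+1) → ℝ)
      = ∑ i, μ i • (Fin.snoc (v i) 1 : Fin (n+1) → ℝ) := by
  funext j
  induction j using Fin.lastCases with
  | last =>
    simp only [Fin.snoc_last, Finset.sum_apply, Pi.smul_apply, smul_eq_mul, mul_one]
    exact hμ.symm
  | cast j => simp [Fin.snoc_castSucc, Finset.sum_apply]

lemma goodcase {n : ℕ} {P : Set (Fin n → ℝ)} (hP : Convex ℝ P) (k : ℕ) {m : ℕ}
    (v : Fin m → (Fin n → ℝ)) (hlat : ∀ i, IsLat (v i)) (hmem : ∀ i, v i ∈ P)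
    (l : Fin m → ℝ) (hl0 : ∀ i, 0 ≤ l i) (hsum : ∑ i, l i = (k : ℝ) + 1)
    (hz : IsLat (∑ i, l i • v i)) (j : Fin m) (hj : 1 ≤ l j) :
    ∑ i, l i • v i ∈ latPts ((k:ℝ) • P) + latPts P := by
  set z := ∑ i, l i • v i with hzdef
  set l' : Fin m → ℝ := fun i => l i - if i = j then 1 else 0 with hl'
  have hy : ∑ i, l' i • v i = z - v j := by
    have h1 : ∑ i, l' i • v i
        = ∑ i, (l i • v i - (if i = j then (1:ℝ) else 0) • v i) :=
      Finset.sum_congr rfl fun i _ => by rw [hl']; rw [sub_smul]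
    rw [h1, Finset.sum_sub_distrib, hzdef]
    congr 1
    simp [ite_smul]
  have hl'0 : ∀ i, 0 ≤ l' i := by
    intro i
    simp only [hl']
    split_ifs with h
    · subst h; linarith
    · simpa using hl0 i
  have hl'sum : ∑ i, l' i = (k : ℝ) := by
    rw [hl', Finset.sum_sub_distrib, hsum, Finset.sum_ite_eq' Finset.univ j (fun _ => (1:ℝ))]
    simp
  have hymem : z - v j ∈ (k:ℝ) • P := by
    rw [← hy]
    exact combo_mem_smul hP v hmem l' hl'0 _ hl'sum (Fin.pos_iff_nonempty.mpr ⟨j⟩)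
  refine Set.mem_add.mpr ⟨z - v j, ⟨hymem, hz.sub (hlat j)⟩, v j, ⟨hmem j, hlat j⟩, by ring⟩

lemma descent {n : ℕ} {P : Set (Fin n → ℝ)} (hP : Convex ℝ P) {k : ℕ} (hk : n - 1 ≤ k)
    (d : ℕ) : ∀ v : Fin (n+1) → (Fin n → ℝ), (∀ i, IsLat (v i)) → (∀ i, v i ∈ P) →
    ∀ l : Fin (n+1) → ℝ, (∀ i, 0 ≤ l i) → (∑ i, l i = (k:ℝ)+1) →
    ∀ D : ℤ, ((D:ℝ) = (Matrix.of fun i => (Fin.snoc (v i) 1 : Fin (n+1) → ℝ)).det) →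
    D ≠ 0 → D.natAbs ≤ d →
    IsLat (∑ i, l i • v i) →
    ∑ i, l i • v i ∈ latPts ((k:ℝ) • P) + latPts P := by
  induction d using Nat.strong_induction_on with
  | _ d IH =>
  intro v hlat hmem l hl0 hsum D hD hD0 hDd hz
  by_cases hgood : ∃ j, 1 ≤ l j
  · obtain ⟨j, hj⟩ := hgood
    exact goodcase hP k v hlat hmem l hl0 hsum hz j hj
  push_neg at hgood
  -- all l i < 1 : forces k + 1 = n and all l i > 0
  have hlt : ∑ i : Fin (n+1), l i < ∑ _i : Fin (n+1), (1:ℝ) :=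
    Finset.sum_lt_sum_of_nonempty Finset.univ_nonempty (fun i _ => hgood i)
  rw [hsum, Finset.sum_const, Finset.card_univ, Fintype.card_fin, nsmul_eq_mul, mul_one] at hlt
  have hkn : k < n := by exact_mod_cast (by push_cast at hlt ⊢; linarith : (k:ℝ) < (n:ℝ))
  have hk1 : k + 1 = n := by omega
  have hkr : (k:ℝ) + 1 = (n:ℝ) := by exact_mod_cast congrArg (Nat.cast (R := ℝ)) hk1
  have hpos : ∀ i, 0 < l i := by
    intro i
    rcases (hl0 i).lt_or_eq with h | h
    · exact h
    · exfalso
      have he : ∑ j ∈ Finset.univ.erase i, l j = (k:ℝ) + 1 := by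
        rw [Finset.sum_erase_eq_sub (Finset.mem_univ i), hsum, ← h, sub_zero]
      have hcard : (Finset.univ.erase i).card = n := by
        rw [Finset.card_erase_of_mem (Finset.mem_univ i), Finset.card_univ, Fintype.card_fin]
        omega
      have hne : (Finset.univ.erase i).Nonempty := by
        rw [← Finset.card_pos, hcard]; omega
      have hlt2 : ∑ j ∈ Finset.univ.erase i, l j < ∑ _j ∈ Finset.univ.erase i, (1:ℝ) :=
        Finset.sum_lt_sum_of_nonempty hne (fun j _ => hgood j)
      rw [he, Finset.sum_const, hcard, nsmul_eq_mul, mul_one, hkr] at hlt2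
      exact lt_irrefl _ hlt2
  -- the complementary lattice point p
  set μ : Fin (n+1) → ℝ := fun i => 1 - l i with hμdef
  have hμpos : ∀ i, 0 < μ i := fun i => by simp only [hμdef]; linarith [hgood i]
  have hμlt : ∀ i, μ i < 1 := fun i => by simp only [hμdef]; linarith [hpos i]
  have hμsum : ∑ i, μ i = 1 := by
    simp only [hμdef]
    rw [Finset.sum_sub_distrib, hsum, Finset.sum_const, Finset.card_univ, Fintype.card_fin,
      nsmul_eq_mul, mul_one, hkr]
    push_cast
    ring
  set p : Fin n → ℝ := ∑ i, μ i • v i with hpdef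
  have hpeq : p = (∑ i, v i) - ∑ i, l i • v i := by
    rw [hpdef, ← Finset.sum_sub_distrib]
    exact Finset.sum_congr rfl fun i _ => by rw [hμdef]; rw [sub_smul, one_smul]
  have hplat : IsLat p := by rw [hpeq]; exact (isLat_sum hlat).sub hz
  have hpmem : p ∈ P := hP.sum_mem (fun i _ => (hμpos i).le) hμsum (fun i _ => hmem i)
  -- choose j minimizing l i / μ i
  obtain ⟨j, -, hjmin⟩ := Finset.exists_min_image Finset.univ (fun i => l i / μ i)
    ⟨0, Finset.mem_univ 0⟩
  set c : ℝ := l j / μ j with hcdef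
  have hc0 : 0 ≤ c := div_nonneg (hl0 j) (hμpos j).le
  have hcμ : c * μ j = l j := div_mul_cancel₀ _ (hμpos j).ne'
  set v' : Fin (n+1) → (Fin n → ℝ) := Function.update v j p with hv'def
  set l' : Fin (n+1) → ℝ := fun i => if i = j then c else l i - c * μ i with hl'def
  have hl'0 : ∀ i, 0 ≤ l' i := by
    intro i
    simp only [hl'def]
    split_ifs with h
    · exact hc0
    · have := hjmin i (Finset.mem_univ i)
      have h2 : c * μ i ≤ l i := by
        have h3 : c * μ i ≤ l i / μ i * μ i :=
          mul_le_mul_of_nonneg_right this (hμpos i).le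
        rwa [div_mul_cancel₀ _ (hμpos i).ne'] at h3
      linarith
  have herase : ∀ (f : Fin (n+1) → ℝ), ∑ i, f i = f j + ∑ i ∈ Finset.univ.erase j, f i :=
    fun f => (Finset.add_sum_erase Finset.univ f (Finset.mem_univ j)).symm
  have heraseV : ∀ (f : Fin (n+1) → (Fin n → ℝ)),
      ∑ i, f i = f j + ∑ i ∈ Finset.univ.erase j, f i :=
    fun f => (Finset.add_sum_erase Finset.univ f (Finset.mem_univ j)).symm
  have hl'sum : ∑ i, l' i = (k:ℝ) + 1 := by
    rw [herase l']
    have h1 : l' j = c := by simp [hl'def]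
    have h2 : ∑ i ∈ Finset.univ.erase j, l' i
        = ∑ i ∈ Finset.univ.erase j, (l i - c * μ i) := by
      refine Finset.sum_congr rfl fun i hi => ?_
      simp only [hl'def]
      rw [if_neg (Finset.ne_of_mem_erase hi)]
    rw [h1, h2, Finset.sum_sub_distrib, ← Finset.mul_sum,
      Finset.sum_erase_eq_sub (Finset.mem_univ j),
      Finset.sum_erase_eq_sub (Finset.mem_univ j), hsum, hμsum]
    linarith [hcμ]
  have hrep : ∑ i, l' i • v' i = ∑ i, l i • v i := by
    rw [heraseV (fun i => l' i • v' i), heraseV (fun i => l i • v i)]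
    have h1 : l' j • v' j = c • p := by
      simp [hl'def, hv'def]
    have h2 : ∑ i ∈ Finset.univ.erase j, l' i • v' i
        = ∑ i ∈ Finset.univ.erase j, (l i • v i - (c * μ i) • v i) := by
      refine Finset.sum_congr rfl fun i hi => ?_
      have hij := Finset.ne_of_mem_erase hi
      simp only [hl'def, hv'def]
      rw [if_neg hij, Function.update_of_ne hij, sub_smul]
    have h3 : c • p = (c * μ j) • v j + ∑ i ∈ Finset.univ.erase j, (c * μ i) • v i := by
      rw [hpdef, Finset.smul_sum]
      rw [heraseV (fun i => c • μ i • v i)]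
      congr 1
      · rw [smul_smul]
      · exact Finset.sum_congr rfl fun i _ => by rw [smul_smul]
    rw [h1, h2, Finset.sum_sub_distrib, h3, hcμ]
    abel
  -- new determinant data
  set M : Matrix (Fin (n+1)) (Fin (n+1)) ℝ :=
    Matrix.of fun i => (Fin.snoc (v i) 1 : Fin (n+1) → ℝ) with hM
  set M' : Matrix (Fin (n+1)) (Fin (n+1)) ℝ :=
    Matrix.of fun i => (Fin.snoc (v' i) 1 : Fin (n+1) → ℝ) with hM'
  have hMM' : M' = M.updateRow j (∑ i, μ i • M i) := by
    ext a b
    by_cases h : a = j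
    · subst h
      rw [Matrix.updateRow_self]
      have : (Fin.snoc (v' a) 1 : Fin (n+1) → ℝ) = ∑ i, μ i • (Fin.snoc (v i) 1 : Fin (n+1) → ℝ) := by
        rw [hv'def, Function.update_self, hpdef]
        exact snoc_combo v μ hμsum
      simp only [hM', Matrix.of_apply]
      rw [this]
      rfl
    · rw [Matrix.updateRow_ne h]
      simp only [hM', hM, Matrix.of_apply, hv'def]
      rw [Function.update_of_ne h]
  have hdet' : M'.det = μ j * M.det := by
    rw [hMM', Matrix.det_updateRow_sum M j μ]
    rfl
  obtain ⟨D', hD'⟩ := det_int M' (by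
    intro a b
    have hlat' : ∀ i, IsLat (v' i) := by
      intro i
      rw [hv'def]
      by_cases h : i = j
      · subst h; rw [Function.update_self]; exact hplat
      · rw [Function.update_of_ne h]; exact hlat i
    simp only [hM', Matrix.of_apply]
    induction b using Fin.lastCases with
    | last => exact ⟨1, by rw [Fin.snoc_last]; norm_num⟩
    | cast b => exact (by rw [Fin.snoc_castSucc]; exact hlat' a b))
  have hD'val : (D' : ℝ) = μ j * (D : ℝ) := by rw [hD', hdet', hD]
  have hD'0 : D' ≠ 0 := by
    intro h
    rw [h] at hD'val
    have : μ j * (D:ℝ) ≠ 0 := mul_ne_zero (hμpos j).ne' (Int.cast_ne_zero.mpr hD0)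
    exact this (by exact_mod_cast hD'val.symm)
  have habs : (D'.natAbs : ℝ) < (D.natAbs : ℝ) := by
    rw [Nat.cast_natAbs, Nat.cast_natAbs]
    push_cast
    rw [hD'val, abs_mul, abs_of_pos (hμpos j)]
    have hDpos : (0:ℝ) < |(D:ℝ)| := abs_pos.mpr (Int.cast_ne_zero.mpr hD0)
    nlinarith [hμlt j]
  have hlt' : D'.natAbs < d := by
    have : D'.natAbs < D.natAbs := by exact_mod_cast habs
    omega
  have hmem' : ∀ i, v' i ∈ P := by
    intro i
    rw [hv'def]
    by_cases h : i = j
    · subst h; rw [Function.update_self]; exact hpmem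
    · rw [Function.update_of_ne h]; exact hmem i
  have hlat' : ∀ i, IsLat (v' i) := by
    intro i
    rw [hv'def]
    by_cases h : i = j
    · subst h; rw [Function.update_self]; exact hplat
    · rw [Function.update_of_ne h]; exact hlat i
  rw [← hrep]
  exact IH D'.natAbs hlt' v' hlat' hmem' l' hl'0 hl'sum D' (by rw [hD']) hD'0 le_rfl
    (by rw [hrep]; exact hz)

/-- Nakagawa's theorem: for a lattice polytope `P` of dimension `n` and any `k ≥ n - 1`,
`(kP ∩ M) + (P ∩ M) = ((k+1)P) ∩ M`. -/
theorem stmt0 (n : ℕ) (P : Set (Fin n → ℝ)) (hP : IsLatticePolytope P)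
    (hdim : polyDim P = n) (k : ℕ) (hk : n - 1 ≤ k) :
    latPts ((k : ℝ) • P) + latPts P = latPts (((k : ℝ) + 1) • P) := by
  obtain ⟨S, hS, hPS⟩ := hP
  have hconv : Convex ℝ P := hPS ▸ convex_convexHull ℝ _
  apply Set.Subset.antisymm
  · -- easy inclusion
    rintro z hz
    rw [Set.mem_add] at hz
    obtain ⟨a, ⟨haP, halat⟩, b, ⟨hbP, hblat⟩, hab⟩ := hz
    refine ⟨?_, hab ▸ halat.add hblat⟩
    rw [hconv.add_smul (by positivity : (0:ℝ) ≤ (k:ℝ)) zero_le_one, one_smul]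
    exact hab ▸ Set.add_mem_add haP hbP
  · rintro z ⟨hzP, hzlat⟩
    rw [Set.mem_smul_set] at hzP
    obtain ⟨w, hwP, hwz⟩ := hzP
    rw [hPS] at hwP
    obtain ⟨ι, hfin, zf, wf, hrange, hai, hwpos, hwsum, hwrep⟩ :=
      eq_pos_convex_span_of_mem_convexHull hwP
    have hzrep : ∀ (m : ℕ) (e : Fin m ≃ ι),
        z = ∑ i, (((k:ℝ)+1) * wf (e i)) • zf (e i) := by
      intro m e
      have h1 : ∑ i, (((k:ℝ)+1) * wf (e i)) • zf (e i)
          = ∑ i : ι, (((k:ℝ)+1) * wf i) • zf i :=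
        Equiv.sum_comp e (fun i => (((k:ℝ)+1) * wf i) • zf i)
      rw [h1, ← hwz, ← hwrep, Finset.smul_sum]
      exact Finset.sum_congr rfl fun i _ => smul_smul _ _ _
    have hmemP : ∀ i : ι, zf i ∈ P := by
      intro i
      rw [hPS]
      exact subset_convexHull ℝ _ (hrange ⟨i, rfl⟩)
    have hlatz : ∀ i : ι, IsLat (zf i) := fun i => hS _ (hrange ⟨i, rfl⟩)
    have hcard : Fintype.card ι ≤ n + 1 := by
      have h1 := hai.card_le_finrank_succ
      have h2 : Module.finrank ℝ (vectorSpan ℝ (Set.range zf)) ≤ n := by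
        have := Submodule.finrank_le (vectorSpan ℝ (Set.range zf))
        simpa [Module.finrank_fin_fun] using this
      omega
    by_cases hbig : ∃ i : ι, 1 ≤ ((k:ℝ)+1) * wf i
    · obtain ⟨i0, hi0⟩ := hbig
      set m := Fintype.card ι with hm
      set e : Fin m ≃ ι := (Fintype.equivFin ι).symm with he
      have hrep := hzrep m e
      rw [hrep]
      refine goodcase hconv k (fun i => zf (e i)) (fun i => hlatz (e i)) (fun i => hmemP (e i))
        (fun i => ((k:ℝ)+1) * wf (e i)) (fun i => mul_nonneg (by positivity) (hwpos _).le) ?_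
        (hrep ▸ hzlat) (e.symm i0) (by simpa using hi0)
      · rw [Equiv.sum_comp e (fun i => ((k:ℝ)+1) * wf i), ← Finset.mul_sum, hwsum, mul_one]
    · push_neg at hbig
      -- forces card ι = n+1
      have hιne : Nonempty ι := by
        rcases isEmpty_or_nonempty ι with h | h
        · exfalso; rw [Finset.univ_eq_empty, Finset.sum_empty] at hwsum; norm_num at hwsum
        · exact h
      have hlt : ∑ i : ι, ((k:ℝ)+1) * wf i < ∑ _i : ι, (1:ℝ) :=
        Finset.sum_lt_sum_of_nonempty Finset.univ_nonempty (fun i _ => hbig i)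
      rw [← Finset.mul_sum, hwsum, mul_one, Finset.sum_const, Finset.card_univ,
        nsmul_eq_mul, mul_one] at hlt
      have hklt : k + 1 < Fintype.card ι := by exact_mod_cast hlt
      have hcard' : Fintype.card ι = n + 1 := by omega
      set e : Fin (n+1) ≃ ι := (Fintype.equivFinOfCardEq hcard').symm with he
      have hrep := hzrep (n+1) e
      have hai' : AffineIndependent ℝ (fun i => zf (e i)) :=
        hai.comp_embedding e.toEmbedding
      have hdet := det_ne_zero_of_affineIndependent hai'
      obtain ⟨D, hD⟩ := det_int (Matrix.of fun i => (Fin.snoc (zf (e i)) 1 : Fin (n+1) → ℝ))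
        (by
          intro a b
          simp only [Matrix.of_apply]
          induction b using Fin.lastCases with
          | last => exact ⟨1, by rw [Fin.snoc_last]; norm_num⟩
          | cast b => exact (by rw [Fin.snoc_castSucc]; exact hlatz (e a) b))
      have hD0 : D ≠ 0 := by
        intro h
        rw [h] at hD
        exact hdet (by exact_mod_cast hD.symm)
      rw [hrep]
      refine descent hconv hk D.natAbs (fun i => zf (e i)) (fun i => hlatz (e i))
        (fun i => hmemP (e i)) (fun i => ((k:ℝ)+1) * wf (e i))
        (fun i => mul_nonneg (by positivity) (hwpos _).le) ?_ D hD hD0 le_rfl (hrep ▸ hzlat)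
      · rw [Equiv.sum_comp e (fun i => ((k:ℝ)+1) * wf i), ← Finset.mul_sum, hwsum, mul_one]
end

section
/- A lattice polytope P of dimension 3 is normal (i.e. (P∩M)+⋯+(P∩M), k times, equals (kP)∩M for all k ≥ 1) if and only if (P∩M) + (P∩M) = (2P)∩M. -/
open Set Pointwise

lemma mem_latPts {n : ℕ} {P : Set (Fin n → ℝ)} {x : Fin n → ℝ} :
    x ∈ latPts P ↔ x ∈ P ∧ IsLat x := Iff.rfl

lemma isLat_sum_s1 {n : ℕ} {ι : Type*} (s : Finset ι) (f : ι → Fin n → ℝ)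
    (h : ∀ i ∈ s, IsLat (f i)) : IsLat (∑ i ∈ s, f i) := by
  classical
  induction s using Finset.induction_on with
  | empty => intro i; exact ⟨0, by simp⟩
  | insert _ _ hx ih =>
    rw [Finset.sum_insert hx]
    exact IsLat.add (h _ (Finset.mem_insert_self _ _))
      (ih fun i hi => h i (Finset.mem_insert_of_mem hi))

lemma combo_mem_smul_s1 {n : ℕ} {P : Set (Fin n → ℝ)} (hP : Convex ℝ P) {c : ℝ} (hc : 0 < c)
    {ι : Type*} (s : Finset ι) (f : ι → Fin n → ℝ) (μ : ι → ℝ)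
    (h0 : ∀ i ∈ s, 0 ≤ μ i) (h1 : ∑ i ∈ s, μ i = c) (hf : ∀ i ∈ s, f i ∈ P) :
    (∑ i ∈ s, μ i • f i) ∈ c • P := by
  rw [Set.mem_smul_set]
  refine ⟨∑ i ∈ s, (μ i / c) • f i, hP.sum_mem (fun i hi => div_nonneg (h0 i hi) hc.le)
    (by rw [← Finset.sum_div, h1, div_self hc.ne']) hf, ?_⟩
  rw [Finset.smul_sum]
  refine Finset.sum_congr rfl fun i hi => ?_
  rw [smul_smul, mul_comm, div_mul_cancel₀ _ hc.ne']
noncomputable abbrev Mhat (w : Fin 4 → (Fin 3 → ℝ)) : Matrix (Fin 4) (Fin 4) ℝ :=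
  Matrix.of fun i => Fin.snoc (w i) 1

lemma exists_int_det (w : Fin 4 → (Fin 3 → ℝ)) (hw : ∀ i, IsLat (w i)) :
    ∃ m : ℤ, (Mhat w).det = (m : ℝ) := by
  classical
  choose W hW using hw
  refine ⟨(Matrix.of fun i => Fin.snoc (W i) (1 : ℤ)).det, ?_⟩
  have : ((Matrix.of fun i => Fin.snoc (W i) (1:ℤ)).det : ℝ)
      = ((Matrix.of fun i => Fin.snoc (W i) (1:ℤ)).map (Int.castRingHom ℝ)).det :=
    RingHom.map_det (Int.castRingHom ℝ) _
  rw [this]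
  congr 1
  ext i j
  refine Fin.lastCases ?_ (fun j => ?_) j
  · simp [Matrix.map_apply, -Fin.reduceLast]
  · simp [Matrix.map_apply, hW i j]

lemma det_ne_zero_of_affInd (w : Fin 4 → (Fin 3 → ℝ)) (h : AffineIndependent ℝ w) :
    (Mhat w).det ≠ 0 := by
  intro hdet
  obtain ⟨v, hv0, hv⟩ := Matrix.exists_vecMul_eq_zero_iff.2 hdet
  have hsum : ∑ i, v i = 0 := by
    have := congrFun hv (Fin.last 3)
    simpa [Matrix.vecMul, dotProduct, -Fin.reduceLast] using this
  have hcomb : ∑ i, v i • w i = 0 := by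
    funext j
    have := congrFun hv (Fin.castSucc j)
    simpa [Matrix.vecMul, dotProduct, Finset.sum_apply] using this
  have := affineIndependent_iff.1 h Finset.univ v hsum hcomb
  exact hv0 (funext fun i => this i (Finset.mem_univ i))

lemma Mhat_update (w : Fin 4 → (Fin 3 → ℝ)) (j : Fin 4) (u : Fin 3 → ℝ) :
    Mhat (Function.update w j u) = (Mhat w).updateRow j (Fin.snoc u 1) := by
  ext i k
  by_cases hij : i = j
  · subst hij; simp [Matrix.updateRow_apply]
  · simp [Matrix.updateRow_apply, hij, Function.update_of_ne hij]

lemma snoc_combo_s1 (w : Fin 4 → (Fin 3 → ℝ)) (ν : Fin 4 → ℝ) (hν : ∑ i, ν i = 1) :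
    (Fin.snoc (∑ i, ν i • w i) (1 : ℝ) : Fin 4 → ℝ) = ∑ i, ν i • Mhat w i := by
  funext k
  refine Fin.lastCases ?_ (fun k => ?_) k
  · simpa [Finset.sum_apply, -Fin.reduceLast] using hν.symm
  · simp [Finset.sum_apply]

lemma hard {P : Set (Fin 3 → ℝ)} (hconv : Convex ℝ P) :
    ∀ (N : ℕ) (w : Fin 4 → (Fin 3 → ℝ)) (lam : Fin 4 → ℝ) (z : Fin 3 → ℝ) (m : ℤ),
    (∀ i, w i ∈ P) → (∀ i, IsLat (w i)) → (∀ i, 0 ≤ lam i) → (∑ i, lam i = 3) →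
    z = ∑ i, lam i • w i → IsLat z → (Mhat w).det = (m : ℝ) → m ≠ 0 → m.natAbs ≤ N →
    ∃ t ∈ latPts P, z - t ∈ latPts ((2 : ℝ) • P) := by
  intro N
  induction N with
  | zero =>
    intro w lam z m _ _ _ _ _ _ _ hm0 hmN
    exact absurd (Int.natAbs_eq_zero.1 (Nat.le_zero.1 hmN)) hm0
  | succ N ih =>
    intro w lam z m hwP hwL hl0 hl3 hz hzL hdet hm0 hmN
    classical
    by_cases hex : ∃ i, 1 ≤ lam i
    · obtain ⟨i0, hi0⟩ := hex
      refine ⟨w i0, ⟨hwP i0, hwL i0⟩, ?_, hzL.sub (hwL i0)⟩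
      have hrepr : z - w i0 = ∑ i, (lam i - if i = i0 then 1 else 0) • w i := by
        rw [hz]
        simp only [sub_smul, ite_smul, one_smul, zero_smul, Finset.sum_sub_distrib]
        rw [Finset.sum_ite_eq' Finset.univ i0 w]
        simp
      rw [hrepr]
      refine combo_mem_smul_s1 hconv (by norm_num) _ _ _ (fun i _ => ?_) ?_ (fun i _ => hwP i)
      · by_cases h : i = i0 <;> simp [h, hi0, hl0 i]
      · simp only [Finset.sum_sub_distrib, hl3, Finset.sum_ite_eq' Finset.univ i0 (fun _ => (1:ℝ))]
        simp
        norm_num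
    · push_neg at hex
      have hpos : ∀ i, 0 < lam i := by
        intro i
        have hcarderase : (Finset.univ.erase i).card = 3 := by
          simp [Finset.card_erase_of_mem]
        have hlt3 : ∑ j ∈ Finset.univ.erase i, lam j < 3 := by
          have h1 : ∑ j ∈ Finset.univ.erase i, lam j <
              ∑ _j ∈ Finset.univ.erase i, (1 : ℝ) :=
            Finset.sum_lt_sum_of_nonempty (by rw [← Finset.card_pos, hcarderase]; norm_num)
              (fun j _ => hex j)
          simpa [hcarderase] using h1
        have := Finset.add_sum_erase Finset.univ lam (Finset.mem_univ i)
        rw [hl3] at this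
        linarith
      set ν : Fin 4 → ℝ := fun i => 1 - lam i with hνdef
      have hν0 : ∀ i, 0 < ν i := fun i => by simp [hνdef]; exact hex i
      have hν1 : ∀ i, ν i < 1 := fun i => by simp [hνdef]; exact hpos i
      have hνsum : ∑ i, ν i = 1 := by
        simp [hνdef, Finset.sum_sub_distrib, hl3]
        norm_num
      set u : Fin 3 → ℝ := (∑ i, w i) - z with hudef
      have hu_repr : u = ∑ i, ν i • w i := by
        rw [hudef, hz]
        simp [hνdef, sub_smul, one_smul, Finset.sum_sub_distrib]
      have huP : u ∈ P := by
        rw [hu_repr]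
        exact hconv.sum_mem (fun i _ => (hν0 i).le) hνsum (fun i _ => hwP i)
      have huL : IsLat u := (isLat_sum_s1 Finset.univ w (fun i _ => hwL i)).sub hzL
      obtain ⟨j, -, hjmin⟩ := Finset.exists_min_image Finset.univ (fun i => lam i / ν i)
        ⟨0, Finset.mem_univ 0⟩
      set c : ℝ := lam j / ν j with hcdef
      have hc0 : 0 ≤ c := div_nonneg (hl0 j) (hν0 j).le
      have hcν : ∀ i, c * ν i ≤ lam i := by
        intro i
        rw [hcdef, div_mul_eq_mul_div, div_le_iff₀ (hν0 j)]
        have h := hjmin i (Finset.mem_univ i)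
        rw [div_le_div_iff₀ (hν0 j) (hν0 i)] at h
        linarith
      have hcj : c * ν j = lam j := by
        rw [hcdef, div_mul_cancel₀ _ (hν0 j).ne']
      set w' : Fin 4 → (Fin 3 → ℝ) := Function.update w j u with hw'def
      set lam' : Fin 4 → ℝ := fun i => if i = j then c else lam i - c * ν i with hlam'def
      have hl0' : ∀ i, 0 ≤ lam' i := by
        intro i
        by_cases h : i = j <;> simp [hlam'def, h, hc0, sub_nonneg, hcν i]
      have herase_nu : ∑ i ∈ Finset.univ.erase j, ν i = 1 - ν j := by
        have := Finset.add_sum_erase Finset.univ ν (Finset.mem_univ j)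
        rw [hνsum] at this; linarith
      have herase_lam : ∑ i ∈ Finset.univ.erase j, lam i = 3 - lam j := by
        have := Finset.add_sum_erase Finset.univ lam (Finset.mem_univ j)
        rw [hl3] at this; linarith
      have hl3' : ∑ i, lam' i = 3 := by
        rw [← Finset.add_sum_erase Finset.univ lam' (Finset.mem_univ j)]
        have h1 : lam' j = c := by simp [hlam'def]
        have h2 : ∑ i ∈ Finset.univ.erase j, lam' i
            = ∑ i ∈ Finset.univ.erase j, (lam i - c * ν i) := by
          refine Finset.sum_congr rfl fun i hi => ?_
          simp [hlam'def, Finset.ne_of_mem_erase hi]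
        rw [h1, h2]
        rw [Finset.sum_sub_distrib, ← Finset.mul_sum, herase_nu, herase_lam]
        nlinarith [hcj]
      have hwP' : ∀ i, w' i ∈ P := by
        intro i
        by_cases h : i = j <;> simp [hw'def, h, huP, hwP i]
      have hwL' : ∀ i, IsLat (w' i) := by
        intro i
        by_cases h : i = j
        · subst h; simpa [hw'def] using huL
        · simpa [hw'def, Function.update_of_ne h] using hwL i
      have hz' : z = ∑ i, lam' i • w' i := by
        rw [← Finset.add_sum_erase Finset.univ (fun i => lam' i • w' i) (Finset.mem_univ j)]
        have h1 : lam' j • w' j = ∑ i, (c * ν i) • w i := by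
          have : lam' j • w' j = c • u := by simp [hlam'def, hw'def]
          rw [this, hu_repr, Finset.smul_sum]
          exact Finset.sum_congr rfl fun i _ => smul_smul c (ν i) (w i)
        have h2 : ∑ i ∈ Finset.univ.erase j, lam' i • w' i
            = ∑ i ∈ Finset.univ.erase j, (lam i • w i - (c * ν i) • w i) := by
          refine Finset.sum_congr rfl fun i hi => ?_
          have hij := Finset.ne_of_mem_erase hi
          simp [hlam'def, hw'def, hij, Function.update_of_ne hij, sub_smul]
        rw [h1, h2, Finset.sum_sub_distrib]
        rw [← Finset.add_sum_erase Finset.univ (fun i => (c * ν i) • w i) (Finset.mem_univ j)]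
        have hcjj : (c * ν j) • w j = lam j • w j := by rw [hcj]
        rw [hcjj, hz, ← Finset.add_sum_erase Finset.univ (fun i => lam i • w i) (Finset.mem_univ j)]
        abel
      have hMrow : Mhat w' = (Mhat w).updateRow j (∑ i, ν i • Mhat w i) := by
        rw [hw'def, Mhat_update, hu_repr, snoc_combo_s1 w ν hνsum]
      have hdet' : (Mhat w').det = ν j * (Mhat w).det := by
        rw [hMrow, Matrix.det_updateRow_sum]
        simp
      obtain ⟨m', hm'⟩ := exists_int_det w' hwL'
      have hm'val : (m' : ℝ) = ν j * (m : ℝ) := by rw [← hm', hdet', hdet]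
      have hm'0 : m' ≠ 0 := by
        intro h
        rw [h, Int.cast_zero] at hm'val
        exact mul_ne_zero (hν0 j).ne' (Int.cast_ne_zero.2 hm0) hm'val.symm
      have habs : |(m' : ℝ)| < |(m : ℝ)| := by
        rw [hm'val, abs_mul, abs_of_pos (hν0 j)]
        have hmabs : 0 < |(m : ℝ)| := abs_pos.2 (Int.cast_ne_zero.2 hm0)
        nlinarith [hν1 j]
      have hlt : m'.natAbs < m.natAbs := by
        have h1 : (m'.natAbs : ℝ) < (m.natAbs : ℝ) := by
          simp only [Nat.cast_natAbs, Int.cast_abs]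
          exact habs
        exact_mod_cast h1
      exact ih w' lam' z m' hwP' hwL' hl0' hl3' hz' hzL hm' hm'0 (by omega)


lemma step {P : Set (Fin 3 → ℝ)} {S : Finset (Fin 3 → ℝ)}
    (hS : ∀ x ∈ S, IsLat x) (hPS : P = convexHull ℝ (S : Set (Fin 3 → ℝ)))
    (k : ℕ) (hk : 2 ≤ k) (z : Fin 3 → ℝ) (hz : z ∈ latPts (((k + 1 : ℕ) : ℝ) • P)) :
    ∃ t ∈ latPts P, z - t ∈ latPts ((k : ℝ) • P) := by
  classical
  have hconv : Convex ℝ P := hPS ▸ convex_convexHull ℝ _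
  obtain ⟨hzP, hzL⟩ := hz
  obtain ⟨p, hpP, hpz⟩ := Set.mem_smul_set.1 hzP
  have hp' : p ∈ convexHull ℝ (S : Set (Fin 3 → ℝ)) := hPS ▸ hpP
  rw [convexHull_eq_union] at hp'
  simp only [Set.mem_iUnion] at hp'
  obtain ⟨T, hTS, hTai, hpT⟩ := hp'
  rw [Finset.mem_convexHull'] at hpT
  obtain ⟨g, hg0, hg1, hgp⟩ := hpT
  have hTP : ∀ y ∈ T, y ∈ P := fun y hy => hPS ▸ subset_convexHull ℝ _ (hTS hy)
  have hTL : ∀ y ∈ T, IsLat y := fun y hy => hS y (hTS hy)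
  set lam : (Fin 3 → ℝ) → ℝ := fun y => ((k : ℝ) + 1) * g y with hlamdef
  have hk1pos : (0 : ℝ) < (k : ℝ) + 1 := by positivity
  have hlam0 : ∀ y ∈ T, 0 ≤ lam y := fun y hy => mul_nonneg hk1pos.le (hg0 y hy)
  have hlamsum : ∑ y ∈ T, lam y = (k : ℝ) + 1 := by
    rw [hlamdef, ← Finset.mul_sum, hg1, mul_one]
  have hzsum : z = ∑ y ∈ T, lam y • y := by
    rw [← hpz, ← hgp, Finset.smul_sum]
    push_cast
    exact Finset.sum_congr rfl fun y _ => (smul_smul _ _ _)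
  have hcard : T.card ≤ 4 := by
    have h1 := hTai.card_le_finrank_succ
    rw [Fintype.card_coe] at h1
    have h2 : Module.finrank ℝ (vectorSpan ℝ (Set.range ((↑) : T → (Fin 3 → ℝ)))) ≤ 3 := by
      have := Submodule.finrank_le (vectorSpan ℝ (Set.range ((↑) : T → (Fin 3 → ℝ))))
      rwa [Module.finrank_fin_fun] at this
    omega
  by_cases hex : ∃ y ∈ T, 1 ≤ lam y
  · obtain ⟨y, hyT, hy1⟩ := hex
    refine ⟨y, ⟨hTP y hyT, hTL y hyT⟩, ?_, hzL.sub (hTL y hyT)⟩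
    have hrepr : z - y = ∑ y' ∈ T, (lam y' - if y' = y then 1 else 0) • y' := by
      rw [hzsum]
      simp only [sub_smul, ite_smul, one_smul, zero_smul, Finset.sum_sub_distrib]
      rw [Finset.sum_ite_eq' T y (fun x => x), if_pos hyT]
    rw [hrepr]
    refine combo_mem_smul_s1 hconv (by exact_mod_cast Nat.lt_of_lt_of_le Nat.zero_lt_two hk)
      _ _ _ (fun y' hy' => ?_) ?_ hTP
    · by_cases h : y' = y <;> simp [h, hy1, hlam0 y' hy']
    · rw [Finset.sum_sub_distrib, hlamsum, Finset.sum_ite_eq' T y (fun _ => (1:ℝ)), if_pos hyT]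
      ring
  · push_neg at hex
    have hTne : T.Nonempty := by
      rcases T.eq_empty_or_nonempty with h | h
      · rw [h, Finset.sum_empty] at hlamsum; linarith
      · exact h
    have hsumlt : ((k : ℝ) + 1) < T.card := by
      calc ((k : ℝ) + 1) = ∑ y ∈ T, lam y := hlamsum.symm
        _ < ∑ _y ∈ T, (1 : ℝ) := Finset.sum_lt_sum_of_nonempty hTne hex
        _ = T.card := by simp
    have hk2 : k = 2 := by
      have : (k : ℝ) + 1 < 4 := lt_of_lt_of_le hsumlt (by exact_mod_cast hcard)
      have : k + 1 < 4 := by exact_mod_cast this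
      omega
    subst hk2
    have hcard4 : T.card = 4 := by
      have : (3 : ℝ) < T.card := by norm_num at hsumlt ⊢; exact_mod_cast hsumlt
      have : (3 : ℕ) < T.card := by exact_mod_cast this
      omega
    set e : Fin 4 ≃ T := (T.equivFinOfCardEq hcard4).symm with hedef
    set w : Fin 4 → (Fin 3 → ℝ) := fun i => (e i : Fin 3 → ℝ) with hwdef
    have hwT : ∀ i, w i ∈ T := fun i => (e i).2
    have hai : AffineIndependent ℝ w := hTai.comp_embedding e.toEmbedding
    have hsum_conv : ∀ f : (Fin 3 → ℝ) → (Fin 3 → ℝ), True := fun _ => trivial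
    have hlamsum4 : ∑ i, lam (w i) = 3 := by
      have h1 : ∑ i, lam (w i) = ∑ y : T, lam y :=
        Fintype.sum_equiv e _ _ (fun i => rfl)
      rw [h1, Finset.sum_coe_sort T lam, hlamsum]
      norm_num
    have hzsum4 : z = ∑ i, lam (w i) • w i := by
      have h1 : ∑ i, lam (w i) • w i = ∑ y : T, lam (y : Fin 3 → ℝ) • (y : Fin 3 → ℝ) :=
        Fintype.sum_equiv e _ _ (fun i => rfl)
      rw [h1, Finset.sum_coe_sort T (fun y => lam y • y), ← hzsum]
    obtain ⟨m, hm⟩ := exists_int_det w (fun i => hTL _ (hwT i))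
    have hm0 : m ≠ 0 := by
      intro h
      exact det_ne_zero_of_affInd w hai (by rw [hm, h, Int.cast_zero])
    have := hard hconv m.natAbs w (fun i => lam (w i)) z m (fun i => hTP _ (hwT i))
      (fun i => hTL _ (hwT i)) (fun i => hlam0 _ (hwT i)) hlamsum4 hzsum4 hzL hm hm0 le_rfl
    obtain ⟨t, htP, htz⟩ := this
    refine ⟨t, htP, ?_⟩
    have : ((2 : ℕ) : ℝ) = (2 : ℝ) := by norm_num
    rwa [this]

/-- A 3-dimensional lattice polytope is normal iff `(P ∩ M) + (P ∩ M) = (2P) ∩ M`. -/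
theorem stmt1 (P : Set (Fin 3 → ℝ)) (hP : IsLatticePolytope P) (hdim : polyDim P = 3) :
    IsNormal P ↔ latPts P + latPts P = latPts ((2 : ℝ) • P) := by
  obtain ⟨S, hS, hPS⟩ := hP
  have hconv : Convex ℝ P := hPS ▸ convex_convexHull ℝ _
  constructor
  · intro hN
    apply Set.Subset.antisymm
    · rintro z ⟨a, ha, b, hb, rfl⟩
      refine ⟨?_, ha.2.add hb.2⟩
      rw [Set.mem_smul_set]
      refine ⟨(1/2 : ℝ) • a + (1/2 : ℝ) • b,
        hconv ha.1 hb.1 (by norm_num) (by norm_num) (by norm_num), ?_⟩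
      rw [smul_add, smul_smul, smul_smul]
      norm_num
    · intro z hz
      have hz' : z ∈ latPts (((2 : ℕ) : ℝ) • P) := by
        have : ((2 : ℕ) : ℝ) = (2 : ℝ) := by norm_num
        rwa [this]
      obtain ⟨u, hu, hsum⟩ := hN 2 (by norm_num) z hz'
      refine ⟨u 0, hu 0, u 1, hu 1, ?_⟩
      rw [hsum, Fin.sum_univ_two]
  · intro h2 k hk
    induction k, hk using Nat.le_induction with
    | base =>
      intro v hv
      have hv' : v ∈ latPts P := by
        have : ((1 : ℕ) : ℝ) = (1 : ℝ) := by norm_num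
        rw [this, one_smul] at hv
        exact hv
      exact ⟨fun _ => v, fun _ => hv', by simp⟩
    | succ n hn ih =>
      intro v hv
      by_cases hn1 : n = 1
      · subst hn1
        have hv' : v ∈ latPts P + latPts P := by
          rw [h2]
          have : ((1 + 1 : ℕ) : ℝ) = (2 : ℝ) := by norm_num
          rwa [this] at hv
        obtain ⟨a, ha, b, hb, hab⟩ := hv'
        refine ⟨![a, b], ?_, ?_⟩
        · intro i; fin_cases i <;> simpa
        · rw [Fin.sum_univ_two, ← hab]; simp
      · have hn2 : 2 ≤ n := by omega
        obtain ⟨t, htP, hvt⟩ := step hS hPS n hn2 v hv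
        obtain ⟨u', hu', hsum⟩ := ih (v - t) hvt
        refine ⟨Fin.snoc u' t, ?_, ?_⟩
        · intro i
          refine Fin.lastCases ?_ (fun i => ?_) i
          · simpa using htP
          · simpa using hu' i
        · rw [Fin.sum_univ_castSucc]
          simp only [Fin.snoc_castSucc, Fin.snoc_last]
          rw [← hsum]
          abel
end

section
/- Let A = Conv{(0,0), (a,0), (0,1), (b,1)} with a, b positive integers (a trapezoid of height 1). Then A is the union of the lattice parallelograms A_i = Conv{(0,0),(a',0),(i,1),(a'+i,1)} for i = 0,…,|b−a| where a' = min(a,b), when a ≤ b (and symmetrically when a > b). In particular A is covered by lattice parallelograms. -/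
open Set Pointwise

lemma mem_hull4 (a c : ℝ) (ha : 0 < a) (p : Fin 2 → ℝ)
    (ht0 : 0 ≤ p 1) (ht1 : p 1 ≤ 1) (hx1 : c * p 1 ≤ p 0) (hx2 : p 0 ≤ c * p 1 + a) :
    p ∈ convexHull ℝ ({![0, 0], ![a, 0], ![c, 1], ![a + c, 1]} : Set (Fin 2 → ℝ)) := by
  set S : Set (Fin 2 → ℝ) := {![0, 0], ![a, 0], ![c, 1], ![a + c, 1]} with hS
  set μ := (p 0 - c * p 1) / a with hμ
  have hμ0 : 0 ≤ μ := div_nonneg (by linarith) ha.le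
  have hμ1 : μ ≤ 1 := by rw [hμ, div_le_one ha]; linarith
  have h1 : (![0, 0] : Fin 2 → ℝ) ∈ convexHull ℝ S := subset_convexHull ℝ S (by simp [hS])
  have h2 : (![a, 0] : Fin 2 → ℝ) ∈ convexHull ℝ S := subset_convexHull ℝ S (by simp [hS])
  have h3 : (![c, 1] : Fin 2 → ℝ) ∈ convexHull ℝ S := subset_convexHull ℝ S (by simp [hS])
  have h4 : (![a + c, 1] : Fin 2 → ℝ) ∈ convexHull ℝ S := subset_convexHull ℝ S (by simp [hS])
  have hbot : (1 - μ) • (![0, 0] : Fin 2 → ℝ) + μ • ![a, 0] ∈ convexHull ℝ S :=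
    (convex_convexHull ℝ S) h1 h2 (by linarith) hμ0 (by ring)
  have htop : (1 - μ) • (![c, 1] : Fin 2 → ℝ) + μ • ![a + c, 1] ∈ convexHull ℝ S :=
    (convex_convexHull ℝ S) h3 h4 (by linarith) hμ0 (by ring)
  have hfin := (convex_convexHull ℝ S) hbot htop (by linarith : (0:ℝ) ≤ 1 - p 1) ht0 (by ring)
  have hμa : μ * a = p 0 - c * p 1 := by rw [hμ]; field_simp
  have hp : p = (1 - p 1) • ((1 - μ) • (![0, 0] : Fin 2 → ℝ) + μ • ![a, 0]) +
      p 1 • ((1 - μ) • (![c, 1] : Fin 2 → ℝ) + μ • ![a + c, 1]) := by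
    funext j
    fin_cases j <;>
      simp only [Fin.mk_zero, Fin.mk_one, Pi.add_apply, Pi.smul_apply, smul_eq_mul,
        Matrix.cons_val_zero, Matrix.cons_val_one, Matrix.head_cons] <;> nlinarith [hμa]
  rw [hp]; exact hfin


set_option maxHeartbeats 1000000 in
/-- The height-one trapezoid `Conv{(0,0),(a,0),(0,1),(b,1)}` with `a ≤ b` is the union of
the lattice parallelograms `A_i = Conv{(0,0),(a,0),(i,1),(a+i,1)}`, `i = 0, …, b - a`. -/
theorem stmt9 (a b : ℕ) (ha : 1 ≤ a) (hb : 1 ≤ b) (hab : a ≤ b) :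
    convexHull ℝ {![0, 0], ![(a : ℝ), 0], ![0, 1], ![(b : ℝ), 1]} =
      ⋃ i ∈ Finset.range (b - a + 1),
        convexHull ℝ {![0, 0], ![(a : ℝ), 0], ![(i : ℝ), 1], ![(a : ℝ) + (i : ℝ), 1]} := by
  have ha' : (0 : ℝ) < a := by exact_mod_cast ha
  have hb' : (0 : ℝ) < b := by exact_mod_cast hb
  have hab' : (a : ℝ) ≤ b := by exact_mod_cast hab
  set S : Set (Fin 2 → ℝ) := {![0, 0], ![(a : ℝ), 0], ![0, 1], ![(b : ℝ), 1]} with hSdef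
  apply Set.Subset.antisymm
  · -- forward inclusion
    set T : Set (Fin 2 → ℝ) :=
      {q | 0 ≤ q 1 ∧ q 1 ≤ 1 ∧ 0 ≤ q 0 ∧ q 0 ≤ a + q 1 * ((b : ℝ) - a)} with hTdef
    have hTconv : Convex ℝ T := by
      intro u hu v hv s r hs hr hsr
      obtain ⟨hu1, hu2, hu3, hu4⟩ := hu
      obtain ⟨hv1, hv2, hv3, hv4⟩ := hv
      refine ⟨?_, ?_, ?_, ?_⟩ <;>
        simp only [Pi.add_apply, Pi.smul_apply, smul_eq_mul] <;> nlinarith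
    have hST : S ⊆ T := by
      rintro q (rfl | rfl | rfl | rfl) <;>
        refine ⟨?_, ?_, ?_, ?_⟩ <;>
          simp only [Matrix.cons_val_zero, Matrix.cons_val_one, Matrix.head_cons] <;> nlinarith
    intro p hp
    have hpT : p ∈ T := convexHull_min hST hTconv hp
    obtain ⟨ht0, ht1, hx0, hx1⟩ := hpT
    -- choose i
    by_cases htz : p 1 = 0
    · refine Set.mem_iUnion₂.2 ⟨0, Finset.mem_range.2 (Nat.succ_pos _), ?_⟩
      have := mem_hull4 (a : ℝ) ((0:ℕ) : ℝ) ha' p ht0 ht1 (by rw [htz]; simpa using hx0)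
        (by rw [htz]; push_cast; nlinarith)
      simpa using this
    · have htpos : 0 < p 1 := lt_of_le_of_ne ht0 (Ne.symm htz)
      obtain ⟨c, hc⟩ : ∃ c : ℤ, c = ⌈(p 0 - a) / p 1⌉ := ⟨_, rfl⟩
      obtain ⟨i, hi⟩ : ∃ i : ℕ, i = c.toNat := ⟨_, rfl⟩
      have hcle : (c : ℝ) ≤ (b - a : ℕ) := by
        have h1 : (p 0 - a) / p 1 ≤ ((b : ℝ) - a) := by
          rw [div_le_iff₀ htpos]
          nlinarith
        have : c ≤ ((b : ℕ) - a : ℕ) := by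
          rw [hc]
          refine Int.ceil_le.2 ?_
          push_cast [Nat.cast_sub hab]
          push_cast [Nat.cast_sub hab] at h1
          exact h1
        exact_mod_cast this
      have hile : i ≤ b - a := by
        have : c ≤ ((b - a : ℕ) : ℤ) := by exact_mod_cast hcle
        omega
      have hiub : (i : ℝ) * p 1 ≤ p 0 := by
        rcases le_or_gt c 0 with h | h
        · have : i = 0 := by omega
          rw [this]; simpa using hx0
        ·
          have hci : (i : ℝ) = (c : ℝ) := by
            have : (i : ℤ) = c := by rw [hi]; exact Int.toNat_of_nonneg h.le
            exact_mod_cast this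
          rw [hci]
          have hceil : (c : ℝ) ≤ (p 0 - a) / p 1 + 1 := by
            have h2 := Int.ceil_lt_add_one ((p 0 - a) / p 1)
            rw [← hc] at h2
            linarith
          have ha1 : (1:ℝ) ≤ a := by exact_mod_cast ha
          have hdiv : (p 0 - a) / p 1 + 1 ≤ p 0 / p 1 := by
            rw [div_add' _ _ _ htpos.ne', div_le_div_iff₀ htpos htpos]
            nlinarith [mul_le_mul_of_nonneg_right (show p 1 ≤ (a:ℝ) from by linarith) htpos.le]
          have : (c : ℝ) ≤ p 0 / p 1 := le_trans hceil hdiv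
          calc (c : ℝ) * p 1 ≤ (p 0 / p 1) * p 1 := by
                exact mul_le_mul_of_nonneg_right this ht0
            _ = p 0 := by field_simp
      have hilb : p 0 ≤ (i : ℝ) * p 1 + a := by
        have hci : (c : ℝ) ≤ (i : ℝ) := by
          have : c ≤ (i : ℤ) := by rw [hi]; exact Int.self_le_toNat c
          exact_mod_cast this
        have hceil : (p 0 - a) / p 1 ≤ (c : ℝ) := by rw [hc]; exact Int.le_ceil _
        have : (p 0 - a) / p 1 ≤ (i : ℝ) := le_trans hceil hci
        have := (div_le_iff₀ htpos).1 this
        nlinarith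
      refine Set.mem_iUnion₂.2 ⟨i, Finset.mem_range.2 (by omega), ?_⟩
      exact mem_hull4 (a : ℝ) (i : ℝ) ha' p ht0 ht1 hiub hilb
  · -- reverse inclusion
    intro p hp
    obtain ⟨i, hi, hpi⟩ := Set.mem_iUnion₂.1 hp
    have hi' : i ≤ b - a := by
      have := Finset.mem_range.1 hi; omega
    have hible : (i : ℝ) ≤ (b : ℝ) - a := by
      have : (i : ℕ) + a ≤ b := by omega
      have : ((i : ℕ) : ℝ) + a ≤ b := by exact_mod_cast this
      linarith
    have hSconv : Convex ℝ (convexHull ℝ S) := convex_convexHull ℝ S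
    have h01 : (![0, 1] : Fin 2 → ℝ) ∈ convexHull ℝ S := subset_convexHull ℝ S (by simp [hSdef])
    have hb1 : (![(b : ℝ), 1] : Fin 2 → ℝ) ∈ convexHull ℝ S := subset_convexHull ℝ S (by simp [hSdef])
    have key : ∀ x : ℝ, 0 ≤ x → x ≤ b → (![x, 1] : Fin 2 → ℝ) ∈ convexHull ℝ S := by
      intro x hx0 hxb
      have hw0 : 0 ≤ x / b := by positivity
      have hw1 : x / b ≤ 1 := by rw [div_le_one hb']; exact hxb
      have hcomb := hSconv h01 hb1 (by linarith : (0:ℝ) ≤ 1 - x / b) hw0 (by ring)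
      have heq : (![x, 1] : Fin 2 → ℝ) = (1 - x / b) • ![0, 1] + (x / b) • ![(b : ℝ), 1] := by
        funext j
        fin_cases j <;>
          simp only [Fin.mk_zero, Fin.mk_one, Pi.add_apply, Pi.smul_apply, smul_eq_mul,
            Matrix.cons_val_zero, Matrix.cons_val_one, Matrix.head_cons] <;> field_simp <;> ring
      rw [heq]; exact hcomb
    refine convexHull_min ?_ hSconv hpi
    rintro q (rfl | rfl | rfl | rfl)
    · exact subset_convexHull ℝ S (by simp [hSdef])
    · exact subset_convexHull ℝ S (by simp [hSdef])
    · exact key (i : ℝ) (by positivity) (by linarith)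
    · exact key ((a : ℝ) + i) (by positivity) (by linarith)
end

section
/- For q ≥ 2, the lattice tetrahedron Q_q = Conv{(0,0,0), (1,0,0), (0,1,0), (1,1,q)} is not very ample; equivalently, there exists a vertex v of Q_q and an integer k ≥ 1 and a lattice point of k·Q_q − k·v not lying in the semigroup generated by (Q_q − v) ∩ ℤ³. -/
open Set Pointwise

lemma halfspace_lemma (q : ℕ) (α β γ c : ℝ)
    (h0 : 0 ≤ c) (h1 : α ≤ c) (h2 : β ≤ c) (h3 : α + β + γ * q ≤ c) :
    convexHull ℝ {(0 : Fin 3 → ℝ), ![1,0,0], ![0,1,0], ![1,1,(q : ℝ)]} ⊆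
      {p : Fin 3 → ℝ | α * p 0 + β * p 1 + γ * p 2 ≤ c} := by
  apply convexHull_min
  · rintro p hp
    simp only [Set.mem_insert_iff, Set.mem_singleton_iff] at hp
    rcases hp with rfl | rfl | rfl | rfl <;>
      simp only [Set.mem_setOf_eq, Pi.zero_apply, Matrix.cons_val_zero, Matrix.cons_val_one,
        Matrix.head_cons, Matrix.cons_val_two, Matrix.tail_cons] <;> nlinarith
  · exact convex_halfSpace_le
      ⟨fun x y => by simp only [Pi.add_apply]; ring,
       fun r x => by simp only [Pi.smul_apply, smul_eq_mul]; ring⟩ c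

/-- For `q ≥ 2`, the tetrahedron `Q_q = Conv{0, e₁, e₂, (1,1,q)}` is not very ample: some
lattice point of a dilated cone at a vertex is not in the semigroup generated by
`(Q_q - v) ∩ ℤ³`. -/
theorem stmt17 (q : ℕ) (hq : 2 ≤ q) :
    ∃ v ∈ Set.extremePoints ℝ
        (convexHull ℝ {(0 : Fin 3 → ℝ), ![1,0,0], ![0,1,0], ![1,1,(q : ℝ)]}),
      ∃ k : ℕ, 1 ≤ k ∧ ∃ w : Fin 3 → ℝ, IsLat w ∧
        w + (k : ℝ) • v ∈
          (k : ℝ) • convexHull ℝ {(0 : Fin 3 → ℝ), ![1,0,0], ![0,1,0], ![1,1,(q : ℝ)]} ∧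
        ¬ ∃ (l : ℕ) (u : Fin l → (Fin 3 → ℝ)),
            (∀ i, IsLat (u i) ∧ u i + v ∈
              convexHull ℝ {(0 : Fin 3 → ℝ), ![1,0,0], ![0,1,0], ![1,1,(q : ℝ)]}) ∧
            w = ∑ i, u i := by
  set S : Set (Fin 3 → ℝ) := {(0 : Fin 3 → ℝ), ![1,0,0], ![0,1,0], ![1,1,(q : ℝ)]} with hS
  have hq1 : (1 : ℝ) ≤ (q : ℝ) := by exact_mod_cast Nat.one_le_of_lt hq
  have hq2 : (2 : ℝ) ≤ (q : ℝ) := by exact_mod_cast hq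
  have hq0 : (0 : ℝ) < (q : ℝ) := by linarith
  -- half space facts
  have hx : ∀ p ∈ convexHull ℝ S, 0 ≤ p 0 := by
    intro p hp
    have := halfspace_lemma q (-1) 0 0 0 le_rfl (by norm_num) le_rfl (by simp) hp
    simp only [Set.mem_setOf_eq] at this; linarith
  have hy : ∀ p ∈ convexHull ℝ S, 0 ≤ p 1 := by
    intro p hp
    have := halfspace_lemma q 0 (-1) 0 0 le_rfl le_rfl (by norm_num) (by simp) hp
    simp only [Set.mem_setOf_eq] at this; linarith
  have hz : ∀ p ∈ convexHull ℝ S, 0 ≤ p 2 := by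
    intro p hp
    have := halfspace_lemma q 0 0 (-1) 0 le_rfl le_rfl le_rfl
      (by have : (0:ℝ) ≤ q := Nat.cast_nonneg q; nlinarith) hp
    simp only [Set.mem_setOf_eq] at this; linarith
  have hzx : ∀ p ∈ convexHull ℝ S, p 2 ≤ q * p 0 := by
    intro p hp
    have := halfspace_lemma q (-(q:ℝ)) 0 1 0 le_rfl (by linarith) le_rfl (by ring_nf; rfl) hp
    simp only [Set.mem_setOf_eq] at this; linarith
  have hzy : ∀ p ∈ convexHull ℝ S, p 2 ≤ q * p 1 := by
    intro p hp
    have := halfspace_lemma q 0 (-(q:ℝ)) 1 0 le_rfl le_rfl (by linarith) (by ring_nf; rfl) hp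
    simp only [Set.mem_setOf_eq] at this; linarith
  have hxyz : ∀ p ∈ convexHull ℝ S, q * p 0 + q * p 1 - p 2 ≤ q := by
    intro p hp
    have := halfspace_lemma q (q:ℝ) (q:ℝ) (-1) (q:ℝ) (le_of_lt hq0) le_rfl le_rfl (by linarith) hp
    simp only [Set.mem_setOf_eq] at this; linarith
  -- membership of vertices
  have h0S : (0 : Fin 3 → ℝ) ∈ convexHull ℝ S := subset_convexHull ℝ S (by simp [hS])
  -- key: any point of hull with p 0 + p 1 = 0 is 0
  have hkey : ∀ p ∈ convexHull ℝ S, p 0 + p 1 = 0 → p = 0 := by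
    intro p hp he
    have h1 := hx p hp; have h2 := hy p hp; have h3 := hz p hp; have h4 := hzx p hp
    funext i
    fin_cases i
    · show p 0 = 0; nlinarith
    · show p 1 = 0; nlinarith
    · show p 2 = 0; nlinarith
  -- 0 is an extreme point
  refine ⟨0, ?_, 2, one_le_two, ![1,1,1], ?_, ?_, ?_⟩
  · rw [mem_extremePoints]
    refine ⟨h0S, fun x₁ hx₁ x₂ hx₂ hseg => ?_⟩
    obtain ⟨a, b, ha, hb, hab, habx⟩ := hseg
    have e1 : a * (x₁ 0 + x₁ 1) + b * (x₂ 0 + x₂ 1) = 0 := by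
      have := congrFun habx 0
      have := congrFun habx 1
      simp only [Pi.add_apply, Pi.smul_apply, smul_eq_mul, Pi.zero_apply] at *
      linarith
    have f1 : 0 ≤ x₁ 0 + x₁ 1 := by have := hx x₁ hx₁; have := hy x₁ hx₁; linarith
    have f2 : 0 ≤ x₂ 0 + x₂ 1 := by have := hx x₂ hx₂; have := hy x₂ hx₂; linarith
    have g1 : x₁ 0 + x₁ 1 = 0 := by nlinarith
    have g2 : x₂ 0 + x₂ 1 = 0 := by nlinarith
    exact ⟨hkey x₁ hx₁ g1, hkey x₂ hx₂ g2⟩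
  · intro i; fin_cases i <;> exact ⟨1, by norm_num⟩
  · -- (1,1,1) + 2•0 = 2 • (1/2,1/2,1/2) ∈ 2 • hull
    have hw0 : (0:ℝ) ≤ 1/(2*(q:ℝ)) := by positivity
    have hw1 : (0:ℝ) ≤ 1/2 - 1/(2*(q:ℝ)) := by
      have h := one_div_le_one_div_of_le (by norm_num : (0:ℝ) < 2) (by linarith : (2:ℝ) ≤ 2*q)
      linarith
    have hp : ![(1:ℝ)/2, 1/2, 1/2] ∈ convexHull ℝ S := by
      have hsum := (convex_convexHull ℝ S).sum_mem (t := (Finset.univ : Finset (Fin 4)))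
        (w := (![1/(2*(q:ℝ)), 1/2 - 1/(2*(q:ℝ)), 1/2 - 1/(2*(q:ℝ)), 1/(2*(q:ℝ))] : Fin 4 → ℝ))
        (z := ![(0 : Fin 3 → ℝ), ![1,0,0], ![0,1,0], ![1,1,(q : ℝ)]])
        (fun i _ => by
          fin_cases i
          · exact hw0
          · exact hw1
          · exact hw1
          · exact hw0)
        (by
          rw [Fin.sum_univ_four]
          simp only [Matrix.cons_val_zero, Matrix.cons_val_one, Matrix.head_cons,
            Matrix.cons_val_two, Matrix.tail_cons, Matrix.cons_val_three]
          field_simp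
          ring)
        (fun i _ => by
          apply subset_convexHull ℝ S
          fin_cases i <;> simp [hS])
      convert hsum using 1
      rw [Fin.sum_univ_four]
      funext i
      fin_cases i <;>
        simp only [Matrix.cons_val_zero, Matrix.cons_val_one, Matrix.head_cons, Pi.add_apply,
          Pi.smul_apply, smul_eq_mul, Matrix.cons_val_two, Matrix.tail_cons,
          Matrix.cons_val_three, Pi.zero_apply] <;> simp <;> field_simp <;> ring
    have h2c : ((2:ℕ):ℝ) = (2:ℝ) := by norm_num
    have key : ![(1:ℝ),1,1] + ((2:ℕ):ℝ) • (0 : Fin 3 → ℝ) = ((2:ℕ):ℝ) • ![(1:ℝ)/2, 1/2, 1/2] := by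
      rw [h2c]
      funext i; fin_cases i <;> simp <;> norm_num
    rw [key]
    exact smul_mem_smul_set hp
  · rintro ⟨l, u, hu, hw⟩
    -- each u i ∈ hull and lattice
    have huS : ∀ i, u i ∈ convexHull ℝ S := fun i => by
      have := (hu i).2; rwa [add_zero] at this
    -- each u i 2 = 0 ∨ q ≤ u i 2
    have hdich : ∀ i, u i 2 = 0 ∨ (q : ℝ) ≤ u i 2 := by
      intro i
      by_cases h : u i 2 = 0
      · exact Or.inl h
      right
      obtain ⟨m2, hm2⟩ := (hu i).1 2
      obtain ⟨m0, hm0⟩ := (hu i).1 0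
      obtain ⟨m1, hm1⟩ := (hu i).1 1
      have hz2 := hz _ (huS i)
      have hzx2 := hzx _ (huS i)
      have hzy2 := hzy _ (huS i)
      have hxyz2 := hxyz _ (huS i)
      -- u i 2 ≥ 1
      have h1 : (1 : ℝ) ≤ u i 2 := by
        rw [hm2] at hz2 h ⊢
        have : (0:ℤ) < m2 := by
          rcases lt_or_eq_of_le (by exact_mod_cast hz2 : (0:ℤ) ≤ m2) with h' | h'
          · exact h'
          · exact absurd (by exact_mod_cast h'.symm) h
        exact_mod_cast this
      -- u i 0 ≥ 1, u i 1 ≥ 1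
      have h00 : (0 : ℝ) < u i 0 := by nlinarith
      have h10 : (1 : ℝ) ≤ u i 0 := by
        rw [hm0] at h00 ⊢
        exact_mod_cast (by exact_mod_cast h00 : (0:ℤ) < m0)
      have h01 : (0 : ℝ) < u i 1 := by nlinarith
      have h11 : (1 : ℝ) ≤ u i 1 := by
        rw [hm1] at h01 ⊢
        exact_mod_cast (by exact_mod_cast h01 : (0:ℤ) < m1)
      nlinarith
    -- sum of third coordinates is 1
    have hsum2 : (1 : ℝ) = ∑ i, u i 2 := by
      have := congrFun hw 2
      simpa [Finset.sum_apply] using this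
    have hnn : ∀ i ∈ Finset.univ, (0:ℝ) ≤ u i 2 := fun i _ => hz _ (huS i)
    by_cases hall : ∀ i, u i 2 = 0
    · rw [Finset.sum_congr rfl (fun i _ => hall i)] at hsum2
      simp at hsum2
    · push_neg at hall
      obtain ⟨i, hi⟩ := hall
      have hqi : (q:ℝ) ≤ u i 2 := (hdich i).resolve_left hi
      have := Finset.single_le_sum hnn (Finset.mem_univ i)
      linarith
end

section
/- For q ≥ 4, the lattice polytope P_q = Q_q + I, where Q_q = Conv{(0,0,0),(1,0,0),(0,1,0),(1,1,q)} and I = Conv{(0,0,0),(0,0,1)}, is not normal: there exists a lattice point of 2P_q that is not the sum of two lattice points of P_q. -/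
open Set Pointwise

/-- A linear inequality valid on a set of points in `ℝ³` is valid on its convex hull. -/
lemma conv_le_aux (S : Set (Fin 3 → ℝ)) (c : Fin 3 → ℝ) (d : ℝ)
    (h : ∀ v ∈ S, c 0 * v 0 + c 1 * v 1 + c 2 * v 2 ≤ d) :
    ∀ p ∈ convexHull ℝ S, c 0 * p 0 + c 1 * p 1 + c 2 * p 2 ≤ d := by
  have hconv : Convex ℝ {x : Fin 3 → ℝ | c 0 * x 0 + c 1 * x 1 + c 2 * x 2 ≤ d} := by
    apply convex_halfSpace_le
    exact ⟨fun x y => by simp [Pi.add_apply]; ring,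
           fun t x => by simp [Pi.smul_apply, smul_eq_mul]; ring⟩
  exact fun p hp => convexHull_min h hconv hp

/-- Facet-type inequalities valid on `P_q = Q_q + I`. -/
lemma Pmem_bounds (q : ℝ) (hq : (4:ℝ) ≤ q) (u : Fin 3 → ℝ)
    (hu : u ∈ convexHull ℝ {(0 : Fin 3 → ℝ), ![1,0,0], ![0,1,0], ![1,1,q]}
            + segment ℝ (0 : Fin 3 → ℝ) ![0,0,1]) :
    (0 ≤ u 0 ∧ u 0 ≤ 1) ∧ (0 ≤ u 1 ∧ u 1 ≤ 1) ∧ 0 ≤ u 2 ∧ u 2 ≤ q * u 0 + 1 ∧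
      u 2 ≤ q * u 1 + 1 ∧ q * (u 0 + u 1) - q ≤ u 2 := by
  obtain ⟨p, hp, s, hs, hps⟩ := Set.mem_add.mp hu
  rw [segment_eq_image] at hs
  obtain ⟨t, ht, hst⟩ := hs
  obtain ⟨ht0, ht1⟩ := ht
  have hs0 : s 0 = 0 := by rw [← hst]; simp
  have hs1 : s 1 = 0 := by rw [← hst]; simp
  have hs2 : s 2 = t := by rw [← hst]; simp
  have hu0 : u 0 = p 0 := by rw [← hps]; simp [hs0]
  have hu1 : u 1 = p 1 := by rw [← hps]; simp [hs1]
  have hu2 : u 2 = p 2 + t := by rw [← hps]; simp [hs2]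
  have h1 : (0:ℝ) * p 0 + 0 * p 1 + (-1) * p 2 ≤ 0 := by
    refine conv_le_aux _ ![0,0,-1] 0 ?_ p hp
    rintro v (rfl | rfl | rfl | rfl) <;> norm_num [Matrix.cons_val_zero, Matrix.cons_val_one, Matrix.cons_val_two, Matrix.head_cons] <;> linarith
  have h2 : (-q) * p 0 + 0 * p 1 + 1 * p 2 ≤ 0 := by
    refine conv_le_aux _ ![-q,0,1] 0 ?_ p hp
    rintro v (rfl | rfl | rfl | rfl) <;> norm_num [Matrix.cons_val_zero, Matrix.cons_val_one, Matrix.cons_val_two, Matrix.head_cons] <;> linarith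
  have h3 : (0:ℝ) * p 0 + (-q) * p 1 + 1 * p 2 ≤ 0 := by
    refine conv_le_aux _ ![0,-q,1] 0 ?_ p hp
    rintro v (rfl | rfl | rfl | rfl) <;> norm_num [Matrix.cons_val_zero, Matrix.cons_val_one, Matrix.cons_val_two, Matrix.head_cons] <;> linarith
  have h4 : q * p 0 + q * p 1 + (-1) * p 2 ≤ q := by
    refine conv_le_aux _ ![q,q,-1] q ?_ p hp
    rintro v (rfl | rfl | rfl | rfl) <;> norm_num [Matrix.cons_val_zero, Matrix.cons_val_one, Matrix.cons_val_two, Matrix.head_cons] <;> linarith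
  constructor
  · constructor <;> nlinarith
  constructor
  · constructor <;> nlinarith
  refine ⟨by nlinarith, by nlinarith, by nlinarith, by nlinarith⟩

/-- The point `(1,1,3)` lies in `2 P_q`. -/
lemma v_mem (q : ℝ) (hq : (4:ℝ) ≤ q) :
    (![1,1,3] : Fin 3 → ℝ) ∈ (2 : ℝ) • (convexHull ℝ
        {(0 : Fin 3 → ℝ), ![1,0,0], ![0,1,0], ![1,1,q]}
        + segment ℝ (0 : Fin 3 → ℝ) ![0,0,1]) := by
  have hq0 : (0:ℝ) < q := by linarith
  rw [Set.mem_smul_set]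
  refine ⟨![1/2,1/2,(3:ℝ)/2], ?_, ?_⟩
  · rw [Set.mem_add]
    refine ⟨![1/2,1/2,1], ?_, ![0,0,1/2], ?_, ?_⟩
    · have := (convex_convexHull ℝ
          ({(0 : Fin 3 → ℝ), ![1,0,0], ![0,1,0], ![1,1,q]} : Set (Fin 3 → ℝ))).sum_mem
        (t := Finset.univ) (w := ![1/q, 1/2-1/q, 1/2-1/q, 1/q])
        (z := ![0, ![1,0,0], ![0,1,0], ![1,1,q]]) ?_ ?_ ?_
      · convert this using 1
        funext i
        rw [Fin.sum_univ_four]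
        fin_cases i <;> simp <;> field_simp
      · have hhalf : q⁻¹ ≤ 2⁻¹ := by
          rw [inv_le_inv₀ hq0 (by norm_num)] at *
          linarith
        intro i _
        fin_cases i <;> simp <;> [positivity; exact hhalf; exact hhalf; positivity]
      · rw [Fin.sum_univ_four]; simp; field_simp; ring
      · intro i _
        fin_cases i <;> exact subset_convexHull ℝ _ (by simp)
    · rw [segment_eq_image]
      refine ⟨1/2, by norm_num, ?_⟩
      funext i; fin_cases i <;> norm_num
    · funext i; fin_cases i <;> norm_num
  · funext i; fin_cases i <;> simp <;> norm_num

/-- For `q ≥ 4`, the polytope `P_q = Q_q + I` (Bruns–Gubeladze) is not normal: some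
lattice point of `2 P_q` is not a sum of two lattice points of `P_q`. -/
theorem stmt18 (q : ℕ) (hq : 4 ≤ q) :
    ∃ v : Fin 3 → ℝ, IsLat v ∧
      v ∈ (2 : ℝ) • (convexHull ℝ {(0 : Fin 3 → ℝ), ![1,0,0], ![0,1,0], ![1,1,(q : ℝ)]}
            + segment ℝ (0 : Fin 3 → ℝ) ![0,0,1]) ∧
      ¬ ∃ u₁ u₂ : Fin 3 → ℝ,
          u₁ ∈ latPts (convexHull ℝ {(0 : Fin 3 → ℝ), ![1,0,0], ![0,1,0], ![1,1,(q : ℝ)]}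
            + segment ℝ (0 : Fin 3 → ℝ) ![0,0,1]) ∧
          u₂ ∈ latPts (convexHull ℝ {(0 : Fin 3 → ℝ), ![1,0,0], ![0,1,0], ![1,1,(q : ℝ)]}
            + segment ℝ (0 : Fin 3 → ℝ) ![0,0,1]) ∧
          v = u₁ + u₂ := by
  have hqR : (4:ℝ) ≤ (q:ℝ) := by exact_mod_cast hq
  refine ⟨![1,1,3], ?_, v_mem (q:ℝ) hqR, ?_⟩
  · intro i; fin_cases i
    exacts [⟨1, by norm_num⟩, ⟨1, by norm_num⟩, ⟨3, by norm_num⟩]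
  · rintro ⟨u₁, u₂, ⟨h1P, h1L⟩, ⟨h2P, h2L⟩, hsum⟩
    obtain ⟨⟨a0,a1⟩,⟨b0,b1⟩,c0,c1,c2,c3⟩ := Pmem_bounds (q:ℝ) hqR u₁ h1P
    obtain ⟨⟨a0',a1'⟩,⟨b0',b1'⟩,c0',c1',c2',c3'⟩ := Pmem_bounds (q:ℝ) hqR u₂ h2P
    have e0 : u₁ 0 + u₂ 0 = 1 := by have := congrFun hsum 0; simp at this; linarith
    have e1 : u₁ 1 + u₂ 1 = 1 := by have := congrFun hsum 1; simp at this; linarith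
    have e2 : u₁ 2 + u₂ 2 = 3 := by have := congrFun hsum 2; simp at this; linarith
    have int01 : ∀ (x : ℝ), (∃ m : ℤ, x = (m:ℝ)) → 0 ≤ x → x ≤ 1 → x = 0 ∨ x = 1 := by
      rintro x ⟨m, rfl⟩ h h'
      have hm0 : (0:ℤ) ≤ m := by exact_mod_cast h
      have hm1 : m ≤ 1 := by exact_mod_cast h'
      interval_cases m <;> simp
    rcases int01 _ (h1L 0) a0 a1 with h|h <;> rcases int01 _ (h1L 1) b0 b1 with h'|h'
    · -- u₁ = (0,0,·), u₂ = (1,1,·)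
      have k0 : u₂ 0 = 1 := by linarith
      have k1 : u₂ 1 = 1 := by linarith
      rw [h] at c1
      rw [k0, k1] at c3'
      linarith
    · -- u₁ = (0,1,·), u₂ = (1,0,·)
      have k1 : u₂ 1 = 0 := by linarith
      rw [h] at c1
      rw [k1] at c2'
      linarith
    · -- u₁ = (1,0,·), u₂ = (0,1,·)
      have k0 : u₂ 0 = 0 := by linarith
      rw [h'] at c2
      rw [k0] at c1'
      linarith
    · -- u₁ = (1,1,·), u₂ = (0,0,·)
      rw [h, h'] at c3
      linarith
end
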